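/- Let 0 < α < 1, λ > 0, h(x,α) = 0 for |x| < α and 1 for α ≤ |x| ≤ 1. If u is a positive solution of u'' + λ h(x,α) e^u = 0 on (-1,1) with u(-1) = u(1) = 0, then Λ(‖u‖_∞) ≤ λ < 4·Λ(‖u‖_∞), where Λ(β) = (1-α)^{-2} e^{-β} η(β)² and η(β) = √2·arctanh(√(1-e^{-β})). -/

import Mathlib

open Set

noncomputable def artanh (x : ℝ) : ℝ := (1 / 2) * Real.log ((1 + x) / (1 - x))

noncomputable def eta (β : ℝ) : ℝ := Real.sqrt 2 * artanh (Real.sqrt (1 - Real.exp (-β)))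

noncomputable def Lam (α β : ℝ) : ℝ := (1 - α) ^ (-2 : ℤ) * Real.exp (-β) * (eta β) ^ 2

noncomputable def step (α x : ℝ) : ℝ := if |x| < α then 0 else 1

/-- `u ∈ C²([-1,1]∖{-α,α}) ∩ C¹[-1,1]`, `u(±1)=0`, solving `u'' + lam·h(x,α)eᵘ = 0`
off `±α`. -/
def IsSolution (α lam : ℝ) (u : ℝ → ℝ) : Prop :=
  ContinuousOn u (Icc (-1) 1) ∧
  (∀ x ∈ Ioo (-1 : ℝ) 1, DifferentiableAt ℝ u x) ∧
  ContinuousOn (deriv u) (Icc (-1) 1) ∧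
  (∀ x ∈ Ioo (-1 : ℝ) 1 \ {-α, α}, DifferentiableAt ℝ (deriv u) x ∧
    deriv (deriv u) x + lam * step α x * Real.exp (u x) = 0) ∧
  u (-1) = 0 ∧ u 1 = 0

lemma artanh_zero : artanh 0 = 0 := by simp [artanh]

lemma hasDerivAt_artanh {y : ℝ} (h1 : -1 < y) (h2 : y < 1) :
    HasDerivAt artanh (1 / (1 - y ^ 2)) y := by
  have hy1 : (0:ℝ) < 1 + y := by linarith
  have hy2 : (0:ℝ) < 1 - y := by linarith
  have hq : HasDerivAt (fun x : ℝ => (1 + x) / (1 - x)) (2 / (1 - y) ^ 2) y := by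
    have h := (HasDerivAt.div ((hasDerivAt_const y (1:ℝ)).add (hasDerivAt_id y))
      ((hasDerivAt_const y (1:ℝ)).sub (hasDerivAt_id y)) (by positivity))
    refine h.congr_deriv (Eq.symm ?_)
    simp only [Pi.add_apply, Pi.sub_apply, id]
    field_simp
    ring
  have hlog : HasDerivAt (fun x : ℝ => Real.log ((1 + x) / (1 - x)))
      ((2 / (1 - y) ^ 2) / ((1 + y) / (1 - y))) y := hq.log (by positivity)
  have : HasDerivAt artanh ((1/2) * ((2 / (1 - y) ^ 2) / ((1 + y) / (1 - y)))) y :=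
    hlog.const_mul _
  have hne : (1 - y ^ 2) ≠ 0 := by nlinarith
  convert this using 1
  field_simp
  ring

lemma artanh_strictMono {p q : ℝ} (hp : -1 < p) (hpq : p < q) (hq : q < 1) :
    artanh p < artanh q := by
  have h1 : (0:ℝ) < 1 + p := by linarith
  have h2 : (0:ℝ) < 1 - p := by linarith
  have h3 : (0:ℝ) < 1 + q := by linarith
  have h4 : (0:ℝ) < 1 - q := by linarith
  have : (1 + p) / (1 - p) < (1 + q) / (1 - q) := by
    rw [div_lt_div_iff₀ h2 h4]; nlinarith
  have := Real.log_lt_log (by positivity) this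
  unfold artanh; linarith

lemma artanh_pos {p : ℝ} (h0 : 0 < p) (h1 : p < 1) : 0 < artanh p := by
  have := artanh_strictMono (by norm_num : (-1:ℝ) < 0) h0 h1
  rwa [artanh_zero] at this

lemma continuousAt_artanh {y : ℝ} (h1 : -1 < y) (h2 : y < 1) : ContinuousAt artanh y := by
  have hy2 : (0:ℝ) < 1 - y := by linarith
  apply ContinuousAt.mul continuousAt_const
  have hpos : (0:ℝ) < (1 + y) / (1 - y) := div_pos (by linarith) hy2
  have hdiv : ContinuousAt (fun x : ℝ => (1 + x) / (1 - x)) y :=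
    ContinuousAt.div (by fun_prop) (by fun_prop) (ne_of_gt hy2)
  exact hdiv.log (ne_of_gt hpos)

/-- constancy from zero derivative on the open interval plus continuity. -/
lemma constOn {f : ℝ → ℝ} {a b : ℝ} (hab : a < b) (hc : ContinuousOn f (Icc a b))
    (hd : ∀ x ∈ Ioo a b, HasDerivAt f 0 x) : ∀ x ∈ Icc a b, f x = f a := by
  have hoo : ∀ x ∈ Ioo a b, ∀ y ∈ Ioo a b, x ≤ y → f y = f x := by
    intro x hx y hy hxy
    have hsub : Icc x y ⊆ Ioo a b := fun z hz => ⟨lt_of_lt_of_le hx.1 hz.1, lt_of_le_of_lt hz.2 hy.2⟩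
    have := constant_of_has_deriv_right_zero (f := f) (a := x) (b := y)
      (fun z hz => ((hd z (hsub hz)).differentiableAt.continuousAt).continuousWithinAt)
      (fun z hz => ((hd z (hsub ⟨hz.1, le_of_lt hz.2⟩)).hasDerivWithinAt))
    exact this y ⟨hxy, le_refl y⟩
  set m := (a + b) / 2 with hm
  have hmm : m ∈ Ioo a b := ⟨by simp [hm]; linarith, by simp [hm]; linarith⟩
  have hconst : ∀ x ∈ Ioo a b, f x = f m := by
    intro x hx
    rcases le_total x m with h | h
    · exact (hoo x hx m hmm h).symm
    · exact hoo m hmm x hx h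
  have hend : ∀ c ∈ Icc a b, c ∈ closure (Ioo a b) → f c = f m := by
    intro c hcm hcl
    have hne : (nhdsWithin c (Ioo a b)).NeBot := mem_closure_iff_nhdsWithin_neBot.mp hcl
    have h1 : Filter.Tendsto f (nhdsWithin c (Ioo a b)) (nhds (f c)) :=
      (hc c hcm).mono Ioo_subset_Icc_self
    have h2 : Filter.Tendsto f (nhdsWithin c (Ioo a b)) (nhds (f m)) := by
      apply Filter.Tendsto.congr' _ tendsto_const_nhds
      filter_upwards [self_mem_nhdsWithin] with z hz
      exact (hconst z hz).symm
    exact tendsto_nhds_unique h1 h2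
  have hcl : ∀ c ∈ Icc a b, f c = f m := by
    intro c hcm
    rcases eq_or_lt_of_le hcm.1 with h | h
    · exact hend c hcm (by rw [closure_Ioo hab.ne]; exact ⟨h.le, hcm.2⟩)
    rcases eq_or_lt_of_le hcm.2 with h2 | h2
    · exact hend c hcm (by rw [closure_Ioo hab.ne]; exact ⟨hcm.1, h2.le⟩)
    · exact hconst c ⟨h, h2⟩
  intro x hx
  rw [hcl x hx, hcl a ⟨le_refl a, le_of_lt hab⟩]

set_option maxHeartbeats 2000000 in
lemma key (α lam M : ℝ) (hα : 0 < α ∧ α < 1) (hlam : 0 < lam) (u : ℝ → ℝ)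
    (hsol : IsSolution α lam u) (hpos : ∀ x ∈ Ioo (-1 : ℝ) 1, 0 < u x)
    (hM : IsGreatest ((fun x => |u x|) '' Icc (-1 : ℝ) 1) M)
    (hda : 0 ≤ deriv u α) :
    Lam α M ≤ lam ∧ lam < 4 * Lam α M := by
  obtain ⟨hα1, hα2⟩ := hα
  obtain ⟨hu_c, hu_d, hd_c, hode, hm1, hp1⟩ := hsol
  have hIoo : ∀ x : ℝ, α < x → x < 1 → x ∈ Ioo (-1 : ℝ) 1 \ {-α, α} := by
    intro x h1 h2
    refine ⟨⟨by linarith, h2⟩, ?_⟩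
    simp only [mem_insert_iff, mem_singleton_iff, not_or]
    constructor <;> intro h <;> linarith [h ▸ h1]
  have hstep1 : ∀ x : ℝ, α < x → step α x = 1 := by
    intro x h
    have := le_abs_self x
    unfold step; rw [if_neg]; push_neg; linarith
  have hode' : ∀ x : ℝ, α < x → x < 1 → deriv (deriv u) x = -(lam * Real.exp (u x)) := by
    intro x h1 h2
    have h := (hode x (hIoo x h1 h2)).2
    rw [hstep1 x h1] at h
    linarith
  have hnn : ∀ y ∈ Icc (-1:ℝ) 1, 0 ≤ u y := by
    intro y hy
    rcases eq_or_lt_of_le hy.1 with h | h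
    · rw [← h]; rw [hm1]
    rcases eq_or_lt_of_le hy.2 with h2 | h2
    · rw [h2, hp1]
    · exact (hpos y ⟨h, h2⟩).le
  have hle : ∀ y ∈ Icc (-1:ℝ) 1, u y ≤ M := fun y hy =>
    le_trans (le_abs_self _) (hM.2 ⟨y, hy, rfl⟩)
  have hIccsub : Icc α 1 ⊆ Icc (-1:ℝ) 1 := Icc_subset_Icc (by linarith) le_rfl
  have a3 : AntitoneOn (deriv u) (Icc α 1) := by
    apply antitoneOn_of_deriv_nonpos (convex_Icc _ _) (hd_c.mono hIccsub)
    · rw [interior_Icc]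
      exact fun x hx => (hode x (hIoo x hx.1 hx.2)).1.differentiableWithinAt
    · rw [interior_Icc]
      intro x hx
      rw [hode' x hx.1 hx.2]
      have := Real.exp_pos (u x)
      nlinarith
  have a1 : AntitoneOn (deriv u) (Icc (-1:ℝ) (-α)) := by
    apply antitoneOn_of_deriv_nonpos (convex_Icc _ _)
      (hd_c.mono (Icc_subset_Icc le_rfl (by linarith)))
    · rw [interior_Icc]
      intro x hx
      obtain ⟨hx1, hx2⟩ := hx
      refine (hode x ⟨⟨hx1, by linarith⟩, ?_⟩).1.differentiableWithinAt
      simp only [mem_insert_iff, mem_singleton_iff, not_or]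
      exact ⟨by rintro rfl; linarith, by rintro rfl; linarith⟩
    · rw [interior_Icc]
      intro x hx
      obtain ⟨hx1, hx2⟩ := hx
      have hmem : x ∈ Ioo (-1 : ℝ) 1 \ {-α, α} := by
        refine ⟨⟨hx1, by linarith⟩, ?_⟩
        simp only [mem_insert_iff, mem_singleton_iff, not_or]
        exact ⟨by rintro rfl; linarith, by rintro rfl; linarith⟩
      have h := (hode x hmem).2
      have hstep : (0:ℝ) ≤ step α x := by unfold step; split <;> norm_num
      have he := Real.exp_pos (u x)
      nlinarith [mul_nonneg (mul_nonneg hlam.le hstep) he.le]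
  have cmid : ∀ x ∈ Icc (-α) α, deriv u x = deriv u (-α) := by
    apply constOn (by linarith) (hd_c.mono (Icc_subset_Icc (by linarith) (by linarith)))
    intro x hx
    obtain ⟨hx1, hx2⟩ := hx
    have hax : |x| < α := abs_lt.mpr ⟨hx1, hx2⟩
    have hmem : x ∈ Ioo (-1 : ℝ) 1 \ {-α, α} := by
      refine ⟨⟨by linarith, by linarith⟩, ?_⟩
      simp only [mem_insert_iff, mem_singleton_iff, not_or]
      exact ⟨by rintro rfl; linarith, by rintro rfl; linarith⟩
    have h := (hode x hmem).2
    have hstep : step α x = 0 := by unfold step; rw [if_pos hax]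
    rw [hstep] at h
    have h0 : deriv (deriv u) x = 0 := by linarith [Real.exp_pos (u x)]
    have := (hode x hmem).1.hasDerivAt
    rwa [h0] at this
  have hmid : deriv u (-α) = deriv u α :=
    (cmid α ⟨by linarith, le_rfl⟩).symm
  have h1neg : deriv u 1 < 0 := by
    by_contra hc
    push_neg at hc
    have hmono : MonotoneOn u (Icc α 1) := by
      apply monotoneOn_of_deriv_nonneg (convex_Icc _ _) (hu_c.mono hIccsub)
      · rw [interior_Icc]
        exact fun x hx => (hu_d x ⟨by linarith [hx.1], hx.2⟩).differentiableWithinAt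
      · rw [interior_Icc]
        intro x hx
        have := a3 ⟨hx.1.le, hx.2.le⟩ ⟨hα2.le, le_rfl⟩ hx.2.le
        linarith
    have h1 := hmono ⟨le_rfl, hα2.le⟩ ⟨hα2.le, le_rfl⟩ hα2.le
    have h2 := hpos α ⟨by linarith, hα2⟩
    rw [hp1] at h1
    linarith
  obtain ⟨b, hbmem, hb0⟩ : ∃ b ∈ Icc α 1, deriv u b = 0 := by
    have := intermediate_value_Icc' hα2.le (hd_c.mono hIccsub)
    obtain ⟨b, hb, hb0⟩ := this ⟨h1neg.le, hda⟩
    exact ⟨b, hb, hb0⟩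
  have hb1 : b < 1 := by
    rcases eq_or_lt_of_le hbmem.2 with h | h
    · exfalso; rw [h] at hb0; linarith
    · exact h
  have hbα : α ≤ b := hbmem.1
  have g1 : ∀ z ∈ Icc α b, 0 ≤ deriv u z := by
    intro z hz
    have := a3 ⟨hz.1, le_trans hz.2 hbmem.2⟩ hbmem hz.2
    rw [hb0] at this; exact this
  have g2 : ∀ z ∈ Icc b 1, deriv u z ≤ 0 := by
    intro z hz
    have := a3 hbmem ⟨le_trans hbα hz.1, hz.2⟩ hz.1
    rw [hb0] at this; exact this
  have g3 : ∀ z ∈ Icc (-1:ℝ) b, 0 ≤ deriv u z := by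
    intro z hz
    rcases le_or_gt α z with h | h
    · exact g1 z ⟨h, hz.2⟩
    rcases le_or_gt (-α) z with h2 | h2
    · rw [cmid z ⟨h2, h.le⟩, hmid]
      exact g1 α ⟨le_rfl, hbα⟩
    · have := a1 ⟨hz.1, h2.le⟩ ⟨by linarith, le_rfl⟩ h2.le
      rw [hmid] at this
      exact le_trans (g1 α ⟨le_rfl, hbα⟩) this
  have mon1 : MonotoneOn u (Icc (-1:ℝ) b) := by
    apply monotoneOn_of_deriv_nonneg (convex_Icc _ _)
      (hu_c.mono (Icc_subset_Icc le_rfl hb1.le))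
    · rw [interior_Icc]
      exact fun x hx => (hu_d x ⟨hx.1, lt_trans hx.2 hb1⟩).differentiableWithinAt
    · rw [interior_Icc]
      exact fun x hx => g3 x ⟨hx.1.le, hx.2.le⟩
  have mon2 : AntitoneOn u (Icc b 1) := by
    apply antitoneOn_of_deriv_nonpos (convex_Icc _ _)
      (hu_c.mono (Icc_subset_Icc (by linarith) le_rfl))
    · rw [interior_Icc]
      exact fun x hx => (hu_d x ⟨by linarith [hx.1], hx.2⟩).differentiableWithinAt
    · rw [interior_Icc]
      exact fun x hx => g2 x ⟨hx.1.le, hx.2.le⟩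
  have hbI : b ∈ Icc (-1:ℝ) 1 := ⟨by linarith, hb1.le⟩
  have hmax : ∀ y ∈ Icc (-1:ℝ) 1, u y ≤ u b := by
    intro y hy
    rcases le_total y b with h | h
    · exact mon1 ⟨hy.1, h⟩ ⟨by linarith, le_rfl⟩ h
    · exact mon2 ⟨le_rfl, by linarith⟩ ⟨h, hy.2⟩ h
  have huM : u b = M := by
    obtain ⟨y, hy, hyM⟩ := hM.1
    have hyM' : |u y| = M := hyM
    have h1 : M ≤ u b := by
      rw [← hyM', abs_of_nonneg (hnn y hy)]
      exact hmax y hy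
    have h2 : u b ≤ M := hle b hbI
    linarith
  have hM0 : 0 < M := by
    rw [← huM]
    exact hpos b ⟨by linarith, hb1⟩
  -- energy
  have hEnEq : ∀ x ∈ Icc α 1,
      (deriv u x)^2 + 2*lam*Real.exp (u x) = 2*lam*Real.exp M := by
    set En := fun x => (deriv u x)^2 + 2*lam*Real.exp (u x) with hEn
    have hEnd : ∀ x ∈ Ioo α 1, HasDerivAt En 0 x := by
      intro x hx
      have hdx := hu_d x ⟨by linarith [hx.1], hx.2⟩
      have hdd := (hode x (hIoo x hx.1 hx.2)).1
      have h1 : HasDerivAt (fun y => (deriv u y)^2)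
          (2 * deriv u x * deriv (deriv u) x) x := by
        have := hdd.hasDerivAt.fun_pow 2
        simpa [mul_comm] using this
      have h2 : HasDerivAt (fun y => 2*lam*Real.exp (u y))
          (2*lam*(Real.exp (u x) * deriv u x)) x :=
        (hdx.hasDerivAt.exp).const_mul (2*lam)
      have := h1.add h2
      rw [hode' x hx.1 hx.2] at this
      refine this.congr_deriv (Eq.symm ?_)
      ring
    have hEc : ContinuousOn En (Icc α 1) := by
      apply ContinuousOn.add
      · exact ((hd_c.mono hIccsub).pow 2)
      · exact continuousOn_const.mul (Real.continuous_exp.comp_continuousOn (hu_c.mono hIccsub))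
    have hconst := constOn hα2 hEc hEnd
    intro x hx
    have h1 : En x = En α := hconst x hx
    have h2 : En b = En α := hconst b hbmem
    have h3 : En b = 2*lam*Real.exp M := by
      simp only [hEn, hb0, huM]
      ring
    show En x = 2*lam*Real.exp M
    rw [h1, ← h2, h3]
  -- strict maximum off b
  have hflat : ∀ y z : ℝ, α ≤ y → y < z → z < 1 → (∀ w ∈ Icc y z, u w = M) → False := by
    intro y z hy hyz hz hconst
    set w0 := (y + z) / 2 with hw0
    have hw0m : w0 ∈ Ioo y z := ⟨by simp [hw0]; linarith, by simp [hw0]; linarith⟩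
    have hder : ∀ w ∈ Ioo y z, deriv u w = 0 := by
      intro w hw
      have hev : u =ᶠ[nhds w] fun _ => M := by
        filter_upwards [isOpen_Ioo.mem_nhds hw] with v hv
        exact hconst v ⟨hv.1.le, hv.2.le⟩
      rw [hev.deriv_eq, deriv_const]
    have hder2 : deriv (deriv u) w0 = 0 := by
      have hev : deriv u =ᶠ[nhds w0] fun _ => 0 := by
        filter_upwards [isOpen_Ioo.mem_nhds hw0m] with v hv
        exact hder v hv
      rw [hev.deriv_eq, deriv_const]
    have := hode' w0 (by linarith [hw0m.1]) (by linarith [hw0m.2])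
    rw [hder2] at this
    have := Real.exp_pos (u w0)
    nlinarith
  have k2 : ∀ z, b < z → z < 1 → u z < M := by
    intro z hbz hz1
    by_contra hcon
    push_neg at hcon
    have hzM : u z = M := le_antisymm (hle z ⟨by linarith, hz1.le⟩) hcon
    apply hflat b z hbα hbz hz1
    intro w hw
    have h1 : u z ≤ u w := mon2 ⟨hw.1, by linarith [hw.2]⟩ ⟨hbz.le, hz1.le⟩ hw.2
    have h2 : u w ≤ M := hle w ⟨by linarith [hw.1], by linarith [hw.2]⟩
    linarith [hzM ▸ h1]
  have k1 : ∀ z, α ≤ z → z < b → u z < M := by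
    intro z hz hzb
    by_contra hcon
    push_neg at hcon
    have hzI : z ∈ Icc (-1:ℝ) 1 := ⟨by linarith, by linarith⟩
    have hzM : u z = M := le_antisymm (hle z hzI) hcon
    apply hflat z b hz hzb hb1
    intro w hw
    have h1 : u z ≤ u w := mon1 ⟨by linarith, hzb.le⟩ ⟨by linarith [hw.1], hw.2⟩ hw.1
    have h2 : u w ≤ M := hle w ⟨by linarith [hw.1], by linarith [hw.2]⟩
    linarith [hzM ▸ h1]
  -- derivative formulas
  have l2 : ∀ z ∈ Ioo b 1, deriv u z = -Real.sqrt (2*lam*(Real.exp M - Real.exp (u z))) := by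
    intro z hz
    have hE := hEnEq z ⟨le_trans hbα hz.1.le, hz.2.le⟩
    have hsq : (deriv u z)^2 = 2*lam*(Real.exp M - Real.exp (u z)) := by linarith
    have h2 : Real.sqrt ((deriv u z)^2) = -(deriv u z) := by
      rw [Real.sqrt_sq_eq_abs, abs_of_nonpos (g2 z ⟨hz.1.le, hz.2.le⟩)]
    rw [← hsq, h2, neg_neg]
  have l1 : ∀ z ∈ Ioo α b, deriv u z = Real.sqrt (2*lam*(Real.exp M - Real.exp (u z))) := by
    intro z hz
    have hE := hEnEq z ⟨hz.1.le, by linarith [hz.2]⟩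
    have hsq : (deriv u z)^2 = 2*lam*(Real.exp M - Real.exp (u z)) := by linarith
    have h2 : Real.sqrt ((deriv u z)^2) = deriv u z := by
      rw [Real.sqrt_sq_eq_abs, abs_of_nonneg (g1 z ⟨hz.1.le, hz.2.le⟩)]
    rw [← hsq, h2]
  -- the auxiliary function t
  set a0 := artanh (Real.sqrt (1 - Real.exp (-M))) with ha0def
  set k := Real.sqrt (2 * lam * Real.exp M) / 2 with hkdef
  have hk : 0 < k := by
    have : 0 < 2 * lam * Real.exp M := by positivity
    have := Real.sqrt_pos.mpr this
    rw [hkdef]; linarith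
  set t := fun z => artanh (Real.sqrt (1 - Real.exp (u z - M))) with htdef
  have hgen : ∀ z ∈ Icc (-1:ℝ) 1, 0 ≤ 1 - Real.exp (u z - M) ∧
      Real.sqrt (1 - Real.exp (u z - M)) < 1 := by
    intro z hz
    have h1 : u z - M ≤ 0 := by linarith [hle z hz]
    have h2 : Real.exp (u z - M) ≤ 1 := Real.exp_le_one_iff.mpr h1
    have h3 : 0 < Real.exp (u z - M) := Real.exp_pos _
    refine ⟨by linarith, ?_⟩
    have : Real.sqrt (1 - Real.exp (u z - M)) < Real.sqrt 1 :=
      Real.sqrt_lt_sqrt (by linarith) (by linarith)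
    rwa [Real.sqrt_one] at this
  have tcont : ContinuousOn t (Icc (-1:ℝ) 1) := by
    have hg : ContinuousOn (fun z => Real.sqrt (1 - Real.exp (u z - M))) (Icc (-1:ℝ) 1) :=
      Real.continuous_sqrt.comp_continuousOn
        (continuousOn_const.sub (Real.continuous_exp.comp_continuousOn
          (hu_c.sub continuousOn_const)))
    intro z hz
    have h := hgen z hz
    have h0 : (0:ℝ) ≤ Real.sqrt (1 - Real.exp (u z - M)) := Real.sqrt_nonneg _
    have hart : ContinuousAt artanh (Real.sqrt (1 - Real.exp (u z - M))) :=
      continuousAt_artanh (by linarith) h.2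
    exact ContinuousAt.comp_continuousWithinAt (f := fun z => Real.sqrt (1 - Real.exp (u z - M))) hart (hg z hz)
  have htd : ∀ z ∈ Ioo (-1:ℝ) 1, u z < M →
      HasDerivAt t (-(deriv u z) / (2 * Real.sqrt (1 - Real.exp (u z - M)))) z := by
    intro z hz hzM
    have hp0 : 0 < Real.exp (u z - M) := Real.exp_pos _
    have hp1 : Real.exp (u z - M) < 1 := Real.exp_lt_one_iff.mpr (by linarith)
    have hq : 0 < 1 - Real.exp (u z - M) := by linarith
    have hsq : 0 < Real.sqrt (1 - Real.exp (u z - M)) := Real.sqrt_pos.mpr hq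
    have hinner : HasDerivAt (fun y => 1 - Real.exp (u y - M))
        (-(Real.exp (u z - M) * deriv u z)) z := by
      have h1 : HasDerivAt (fun y => Real.exp (u y - M))
          (Real.exp (u z - M) * deriv u z) z :=
        ((hu_d z hz).hasDerivAt.sub_const M).exp
      simpa using h1.const_sub 1
    have hsqrt : HasDerivAt (fun y => Real.sqrt (1 - Real.exp (u y - M)))
        (1 / (2 * Real.sqrt (1 - Real.exp (u z - M))) * -(Real.exp (u z - M) * deriv u z)) z :=
      (Real.hasDerivAt_sqrt hq.ne').comp z hinner
    have hart : HasDerivAt artanh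
        (1 / (1 - (Real.sqrt (1 - Real.exp (u z - M)))^2))
        (Real.sqrt (1 - Real.exp (u z - M))) :=
      hasDerivAt_artanh (by linarith [Real.sqrt_nonneg (1 - Real.exp (u z - M))])
        (hgen z ⟨hz.1.le, hz.2.le⟩).2
    have htotal := hart.comp z hsqrt
    refine htotal.congr_deriv (Eq.symm ?_)
    rw [Real.sq_sqrt hq.le]
    have h1 : (1:ℝ) - (1 - Real.exp (u z - M)) = Real.exp (u z - M) := by ring
    rw [h1]
    field_simp
  -- derivative of t on the right interval
  have hsplit : ∀ z ∈ Icc (-1:ℝ) 1, u z < M →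
      Real.sqrt (2*lam*(Real.exp M - Real.exp (u z)))
        = Real.sqrt (2*lam*Real.exp M) * Real.sqrt (1 - Real.exp (u z - M)) := by
    intro z hz hzM
    have he : Real.exp M * Real.exp (u z - M) = Real.exp (u z) := by
      rw [← Real.exp_add]; congr 1; ring
    have harg : 2*lam*(Real.exp M - Real.exp (u z))
        = (2*lam*Real.exp M) * (1 - Real.exp (u z - M)) := by
      linear_combination (2*lam) * he
    rw [harg, Real.sqrt_mul (by positivity)]
  have htk2 : ∀ z ∈ Ioo b 1, HasDerivAt t k z := by
    intro z hz
    have hzI : z ∈ Ioo (-1:ℝ) 1 := ⟨by linarith [hz.1], hz.2⟩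
    have hzM := k2 z hz.1 hz.2
    have h := htd z hzI hzM
    have hsq : 0 < Real.sqrt (1 - Real.exp (u z - M)) :=
      Real.sqrt_pos.mpr (by
        have : Real.exp (u z - M) < 1 := Real.exp_lt_one_iff.mpr (by linarith)
        linarith)
    have heq : -(deriv u z) / (2 * Real.sqrt (1 - Real.exp (u z - M))) = k := by
      rw [l2 z hz, neg_neg, hsplit z ⟨by linarith [hz.1], hz.2.le⟩ hzM, hkdef]
      field_simp
    rwa [heq] at h
  have htk1 : ∀ z ∈ Ioo α b, HasDerivAt t (-k) z := by
    intro z hz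
    have hzI : z ∈ Ioo (-1:ℝ) 1 := ⟨by linarith [hz.1], by linarith [hz.2]⟩
    have hzM := k1 z hz.1.le hz.2
    have h := htd z hzI hzM
    have heq : -(deriv u z) / (2 * Real.sqrt (1 - Real.exp (u z - M))) = -k := by
      rw [l1 z hz, hsplit z ⟨by linarith [hz.1], by linarith [hz.2]⟩ hzM, hkdef]
      have hsq : 0 < Real.sqrt (1 - Real.exp (u z - M)) :=
        Real.sqrt_pos.mpr (by
          have : Real.exp (u z - M) < 1 := Real.exp_lt_one_iff.mpr (by linarith)
          linarith)
      field_simp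
    rwa [heq] at h
  -- MVT on [b, 1]
  have ht_b : t b = 0 := by
    rw [htdef]
    simp only [huM, sub_self, Real.exp_zero, Real.sqrt_zero, artanh_zero]
  have ht_1 : t 1 = a0 := by
    rw [htdef, ha0def]
    simp only [hp1, zero_sub]
  have ha0k : a0 = k * (1 - b) := by
    obtain ⟨c, hc, hceq⟩ := exists_hasDerivAt_eq_slope t (fun _ => k) hb1
      (tcont.mono (Icc_subset_Icc (by linarith) le_rfl)) htk2
    rw [ht_1, ht_b, sub_zero] at hceq
    rw [eq_div_iff (ne_of_gt (by linarith : (0:ℝ) < 1 - b))] at hceq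
    linarith [hceq]
  -- the inequality b - α < 1 - b
  have hineq : b - α < 1 - b := by
    rcases eq_or_lt_of_le hbα with h | h
    · rw [← h]; linarith
    · obtain ⟨c, hc, hceq⟩ := exists_hasDerivAt_eq_slope t (fun _ => -k) h
        (tcont.mono (Icc_subset_Icc (by linarith) (by linarith))) htk1
      rw [ht_b] at hceq
      have htα : t α = k * (b - α) := by
        have hbα' : b - α ≠ 0 := by linarith
        field_simp at hceq
        linarith [hceq]
      have hlt : t α < a0 := by
        rw [htdef, ha0def]
        have huα : 0 < u α := hpos α ⟨by linarith, by linarith⟩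
        have h1 : Real.exp (-M) < Real.exp (u α - M) := Real.exp_lt_exp.mpr (by linarith)
        have h2 : 0 ≤ 1 - Real.exp (u α - M) := (hgen α ⟨by linarith, by linarith⟩).1
        have h3 : Real.sqrt (1 - Real.exp (u α - M)) < Real.sqrt (1 - Real.exp (-M)) :=
          Real.sqrt_lt_sqrt h2 (by linarith)
        have h4 : Real.sqrt (1 - Real.exp (-M)) < 1 := by
          have : Real.sqrt (1 - Real.exp (-M)) < Real.sqrt 1 :=
            Real.sqrt_lt_sqrt (by linarith [Real.exp_pos (-M)] : (0:ℝ) ≤ 1 - Real.exp (-M))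
              (by linarith [Real.exp_pos (-M)])
          rwa [Real.sqrt_one] at this
        exact artanh_strictMono
          (by linarith [Real.sqrt_nonneg (1 - Real.exp (u α - M))]) h3 h4
      rw [htα, ha0k] at hlt
      nlinarith [hk]
  -- final algebra
  have hb1' : (0:ℝ) < 1 - b := by linarith
  have ha0pos : 0 < a0 := by
    rw [ha0def]
    have h1 : Real.exp (-M) < 1 := Real.exp_lt_one_iff.mpr (by linarith)
    have h2 : 0 < 1 - Real.exp (-M) := by linarith
    apply artanh_pos (Real.sqrt_pos.mpr h2)
    have : Real.sqrt (1 - Real.exp (-M)) < Real.sqrt 1 :=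
      Real.sqrt_lt_sqrt h2.le (by linarith [Real.exp_pos (-M)])
    rwa [Real.sqrt_one] at this
  have hksq : k^2 = lam * Real.exp M / 2 := by
    rw [hkdef, div_pow, Real.sq_sqrt (by positivity)]
    ring
  have hlameq : lam = 2 * a0^2 * Real.exp (-M) / (1 - b)^2 := by
    have h1 : a0^2 = k^2 * (1 - b)^2 := by rw [ha0k]; ring
    rw [hksq] at h1
    have hem : Real.exp (-M) * Real.exp M = 1 := by
      rw [← Real.exp_add]; simp
    rw [eq_div_iff (by positivity)]
    nlinarith [h1, hem, Real.exp_pos M, Real.exp_pos (-M)]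
  have hLamEq : Lam α M = 2 * a0^2 * Real.exp (-M) / (1 - α)^2 := by
    unfold Lam eta
    rw [← ha0def]
    have h1 : ((1:ℝ) - α) ^ (-2:ℤ) = ((1 - α)^2)⁻¹ := by
      rw [zpow_neg, zpow_two, pow_two]
    rw [h1]
    have h2 : (Real.sqrt 2 * a0)^2 = 2 * a0^2 := by
      rw [mul_pow, Real.sq_sqrt (by norm_num : (0:ℝ) ≤ 2)]
    rw [h2, div_eq_mul_inv]
    ring
  have hαb2 : 0 < 1 - α := by linarith
  constructor
  · rw [hLamEq, hlameq]
    apply div_le_div_of_nonneg_left (by positivity) (by positivity)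
    nlinarith
  · have hN : 0 < 2 * a0^2 * Real.exp (-M) := by positivity
    rw [hLamEq, hlameq, mul_div_assoc']
    rw [div_lt_div_iff₀ (by positivity) (by positivity)]
    have h4 : (1-α)^2 < 4*((1-b)^2) := by nlinarith [hineq, hαb2, hb1']
    nlinarith [mul_lt_mul_of_pos_left h4 hN]

set_option maxHeartbeats 1000000 in
theorem stmt_13 (α lam M : ℝ) (hα : 0 < α ∧ α < 1) (hlam : 0 < lam) (u : ℝ → ℝ)
    (hsol : IsSolution α lam u) (hpos : ∀ x ∈ Ioo (-1 : ℝ) 1, 0 < u x)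
    (hM : IsGreatest ((fun x => |u x|) '' Icc (-1 : ℝ) 1) M) :
    Lam α M ≤ lam ∧ lam < 4 * Lam α M := by
  have hα1 := hα.1
  have hα2 := hα.2
  have hu_c := hsol.1
  have hu_d := hsol.2.1
  have hd_c := hsol.2.2.1
  have hode := hsol.2.2.2.1
  have hm1 := hsol.2.2.2.2.1
  have hp1 := hsol.2.2.2.2.2
  have hmidc : deriv u (-α) = deriv u α := by
    have cmid : ∀ x ∈ Icc (-α) α, deriv u x = deriv u (-α) := by
      apply constOn (by linarith) (hd_c.mono (Icc_subset_Icc (by linarith) (by linarith)))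
      intro x hx
      obtain ⟨hx1, hx2⟩ := hx
      have hax : |x| < α := abs_lt.mpr ⟨hx1, hx2⟩
      have hmem : x ∈ Ioo (-1 : ℝ) 1 \ {-α, α} := by
        refine ⟨⟨by linarith, by linarith⟩, ?_⟩
        simp only [mem_insert_iff, mem_singleton_iff, not_or]
        exact ⟨by rintro rfl; linarith, by rintro rfl; linarith⟩
      have h := (hode x hmem).2
      have hstep : step α x = 0 := by unfold step; rw [if_pos hax]
      rw [hstep] at h
      have h0 : deriv (deriv u) x = 0 := by linarith [Real.exp_pos (u x)]
      have := (hode x hmem).1.hasDerivAt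
      rwa [h0] at this
    exact (cmid α ⟨by linarith, le_rfl⟩).symm
  rcases le_or_gt 0 (deriv u α) with hda | hda
  · exact key α lam M hα hlam u hsol hpos hM hda
  · -- reflect
    have hmapsTo : MapsTo (fun x : ℝ => -x) (Icc (-1:ℝ) 1) (Icc (-1:ℝ) 1) := by
      intro x hx
      obtain ⟨h1, h2⟩ := hx
      simp only [mem_Icc]
      constructor <;> linarith
    have hmem' : ∀ x : ℝ, x ∈ Ioo (-1 : ℝ) 1 \ {-α, α} → -x ∈ Ioo (-1 : ℝ) 1 \ {-α, α} := by
      intro x hx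
      obtain ⟨⟨hx1, hx2⟩, hxs⟩ := hx
      simp only [mem_insert_iff, mem_singleton_iff, not_or] at hxs
      refine ⟨⟨by linarith, by linarith⟩, ?_⟩
      simp only [mem_insert_iff, mem_singleton_iff, not_or]
      constructor
      · intro h; exact hxs.2 (by linarith)
      · intro h; exact hxs.1 (by linarith)
    have hvd' : ∀ x : ℝ, deriv (fun y => u (-y)) x = -deriv u (-x) := fun x =>
      deriv_comp_neg u x
    have hvdf : deriv (fun y => u (-y)) = fun x => -deriv u (-x) := funext hvd'
    have hsolv : IsSolution α lam (fun y => u (-y)) := by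
      refine ⟨?_, ?_, ?_, ?_, ?_, ?_⟩
      · exact hu_c.comp continuous_neg.continuousOn hmapsTo
      · intro x hx
        exact (hu_d (-x) ⟨by linarith [hx.2], by linarith [hx.1]⟩).comp x
          (differentiable_neg x)
      · rw [hvdf]
        exact (hd_c.comp continuous_neg.continuousOn hmapsTo).neg
      · intro x hx
        have hmx := hmem' x hx
        constructor
        · rw [hvdf]
          exact ((hode (-x) hmx).1.comp x (differentiable_neg x)).neg
        · have hdd : deriv (deriv (fun y => u (-y))) x = deriv (deriv u) (-x) := by
            rw [hvdf]
            have h1 : deriv (fun y => -deriv u (-y)) x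
                = -deriv (fun y => deriv u (-y)) x := deriv.neg
            rw [h1, deriv_comp_neg (deriv u) x, neg_neg]
          have hstep : step α x = step α (-x) := by unfold step; rw [abs_neg]
          rw [hdd, hstep]
          exact (hode (-x) hmx).2
      · show u (-(-1:ℝ)) = 0
        rw [neg_neg]; exact hp1
      · show u (-(1:ℝ)) = 0
        exact hm1
    have hposv : ∀ x ∈ Ioo (-1:ℝ) 1, 0 < u (-x) := fun x hx =>
      hpos (-x) ⟨by linarith [hx.2], by linarith [hx.1]⟩
    have hMv : IsGreatest ((fun x => |u (-x)|) '' Icc (-1:ℝ) 1) M := by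
      constructor
      · obtain ⟨y, hy, hyM⟩ := hM.1
        refine ⟨-y, ⟨by linarith [hy.2], by linarith [hy.1]⟩, ?_⟩
        show |u (-(-y))| = M
        rw [neg_neg]; exact hyM
      · rintro m ⟨y, hy, rfl⟩
        exact hM.2 ⟨-y, ⟨by linarith [hy.2], by linarith [hy.1]⟩, rfl⟩
    have hdav : 0 ≤ deriv (fun y => u (-y)) α := by
      rw [hvd' α, hmidc]
      linarith
    exact key α lam M hα hlam (fun y => u (-y)) hsolv hposv hMv hdav
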